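/- Let F be a field, let f ∈ F[A_0, ..., A_n] be a homogeneous polynomial, and suppose the monomial A_0^{i_0} A_1^{i_1} ⋯ A_n^{i_n} appears in f with a nonzero coefficient, where i_0 + ... + i_n equals the degree of f. If S_0, ..., S_n ⊆ F satisfy |S_j| > i_j for all 0 ≤ j ≤ n, then there exist a_0 ∈ S_0, ..., a_n ∈ S_n with f(a_0, ..., a_n) ≠ 0. -/

import Mathlib

open MvPolynomial


namespace CNaux

variable {F : Type*} [Field F] {σ : Type*} [DecidableEq σ]

lemma totalDegree_bind₁_le (g : σ → MvPolynomial σ F)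
    (hg : ∀ j, (g j).totalDegree ≤ 1) (p : MvPolynomial σ F) :
    (bind₁ g p).totalDegree ≤ p.totalDegree := by
  conv_lhs => rw [p.as_sum, map_sum]
  apply totalDegree_finsetSum_le
  intro d hd
  rw [bind₁_monomial]
  calc (C (coeff d p) * ∏ i ∈ d.support, g i ^ d i).totalDegree
      ≤ (C (coeff d p) : MvPolynomial σ F).totalDegree
        + (∏ i ∈ d.support, g i ^ d i).totalDegree := totalDegree_mul _ _
    _ ≤ 0 + ∑ i ∈ d.support, (g i ^ d i).totalDegree := by
        gcongr
        · exact le_of_eq (totalDegree_C _)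
        · exact totalDegree_finset_prod _ _
    _ ≤ ∑ i ∈ d.support, d i := by
        rw [zero_add]
        apply Finset.sum_le_sum
        intro i _
        calc (g i ^ d i).totalDegree ≤ d i * (g i).totalDegree := totalDegree_pow _ _
          _ ≤ d i * 1 := by gcongr; exact hg i
          _ = d i := mul_one _
    _ ≤ p.totalDegree := le_totalDegree hd

/-- shift substitution -/
noncomputable def sh (i : σ) (s : F) : σ → MvPolynomial σ F :=
  fun j => if j = i then X i + C s else X j

lemma sh_deg (i : σ) (s : F) (j : σ) : ((sh i s) j).totalDegree ≤ 1 := by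
  unfold sh
  split
  · refine (totalDegree_add _ _).trans ?_
    simp [totalDegree_X, totalDegree_C]
  · exact le_of_eq (totalDegree_X _)

lemma sh_sh (i : σ) (s : F) (p : MvPolynomial σ F) :
    bind₁ (sh i (-s)) (bind₁ (sh i s) p) = p := by
  rw [bind₁_bind₁]
  have : (fun j => bind₁ (sh i (-s)) (sh i s j)) = (X : σ → MvPolynomial σ F) := by
    funext j
    unfold sh
    by_cases h : j = i <;> simp [h]
  rw [this, bind₁_X_left, AlgHom.id_apply]

lemma sh_totalDegree (i : σ) (s : F) (p : MvPolynomial σ F) :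
    (bind₁ (sh i s) p).totalDegree = p.totalDegree := by
  refine le_antisymm (totalDegree_bind₁_le _ (sh_deg i s) p) ?_
  conv_lhs => rw [← sh_sh i s p]
  exact totalDegree_bind₁_le _ (sh_deg i (-s)) _

lemma totalDegree_mul_X {p : MvPolynomial σ F} (hp : p ≠ 0) (i : σ) :
    (p * X i).totalDegree = p.totalDegree + 1 := by
  rw [totalDegree, support_mul_X, Finset.sup_map]
  rw [totalDegree]
  have hs : p.support.Nonempty := Finset.nonempty_iff_ne_empty.mpr (fun h => hp (MvPolynomial.support_eq_empty.mp h))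
  rw [← Finset.sup'_eq_sup hs, ← Finset.sup'_eq_sup hs]
  rw [Finset.comp_sup'_eq_sup'_comp hs (fun m : ℕ => m + 1) (fun x y => (Nat.succ_max_succ x y).symm)]
  apply Finset.sup'_congr hs rfl
  intro d _
  simp [Finsupp.sum_add_index, Function.comp, addRightEmbedding]

end CNaux

namespace Part2
variable {F : Type*} [Field F] {σ : Type*} [DecidableEq σ]
open CNaux

/-- substitute `s` for variable `i` -/
noncomputable def sb (i : σ) (s : F) : σ → MvPolynomial σ F :=
  fun j => if j = i then C s else X j

lemma sb_deg (i : σ) (s : F) (j : σ) : ((sb i s) j).totalDegree ≤ 1 := by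
  unfold sb
  split
  · simp [totalDegree_C]
  · exact le_of_eq (totalDegree_X _)

lemma dvd_sub_sb (i : σ) (s : F) (p : MvPolynomial σ F) :
    (X i - C s) ∣ (p - bind₁ (sb i s) p) := by
  induction p using MvPolynomial.induction_on with
  | C a => simp
  | add p q hp hq =>
      rw [map_add]
      have : p + q - (bind₁ (sb i s) p + bind₁ (sb i s) q)
          = (p - bind₁ (sb i s) p) + (q - bind₁ (sb i s) q) := by ring
      rw [this]
      exact dvd_add hp hq
  | mul_X p j hp =>
      rw [map_mul, bind₁_X_right]
      have key : p * X j - bind₁ (sb i s) p * sb i s j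
          = (p - bind₁ (sb i s) p) * X j + bind₁ (sb i s) p * (X j - sb i s j) := by ring
      rw [key]
      refine dvd_add (hp.mul_right _) ?_
      unfold sb
      by_cases h : j = i
      · subst h; simp only [if_pos rfl]
        exact Dvd.dvd.mul_left dvd_rfl _
      · simp [h]

lemma coeff_sb_eq_zero (i : σ) (s : F) (p : MvPolynomial σ F) {t : σ →₀ ℕ} (ht : t i ≠ 0) :
    coeff t (bind₁ (sb i s) p) = 0 := by
  by_contra h
  have hv : i ∈ (bind₁ (sb i s) p).vars :=
    (mem_vars i).mpr ⟨t, mem_support_iff.mpr h, Finsupp.mem_support_iff.mpr ht⟩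
  obtain ⟨k, _, hk⟩ := mem_vars_bind₁ _ _ hv
  unfold sb at hk
  by_cases hki : k = i
  · rw [if_pos hki, vars_C] at hk; exact absurd hk (Finset.notMem_empty i)
  · rw [if_neg hki, vars_X] at hk
    exact hki (Finset.mem_singleton.mp hk).symm

lemma eval_sb (i : σ) (s : F) (p : MvPolynomial σ F) (a : σ → F) :
    eval a (bind₁ (sb i s) p) = eval (Function.update a i s) p := by
  have : eval a (bind₁ (sb i s) p) = aeval a (bind₁ (sb i s) p) := rfl
  rw [this, aeval_bind₁]
  have h2 : (fun j => aeval a (sb i s j)) = Function.update a i s := by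
    funext j
    unfold sb
    by_cases h : j = i <;> simp [h, Function.update_apply]
  rw [h2]
  rfl

lemma totalDegree_mul_X_sub_C {g : MvPolynomial σ F} (hg : g ≠ 0) (i : σ) (s : F) :
    (g * (X i - C s)).totalDegree = g.totalDegree + 1 := by
  have hb : bind₁ (sh i s) (g * (X i - C s)) = bind₁ (sh i s) g * X i := by
    rw [map_mul, map_sub, bind₁_X_right, bind₁_C_right]
    unfold sh
    simp
  have hg0 : bind₁ (sh i s) g ≠ 0 := by
    intro h
    have := sh_sh i s g
    rw [h, map_zero] at this
    exact hg this.symm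
  rw [← sh_totalDegree i s (g * (X i - C s)), hb, totalDegree_mul_X hg0,
    sh_totalDegree i s g]

end Part2

namespace Part3
open CNaux Part2

variable {F : Type*} [Field F] {m : ℕ}

lemma sum_univ_eq_sum_support (t : Fin m →₀ ℕ) :
    ∑ j ∈ t.support, t j = ∑ j, t j :=
  Finset.sum_subset t.support.subset_univ
    (fun x _ hx => Finsupp.notMem_support_iff.mp hx)

lemma CN_const (f : MvPolynomial (Fin m) F) (t : Fin m →₀ ℕ)
    (hdeg : f.totalDegree = ∑ j, t j) (h0 : ∑ j, t j = 0) (hc : coeff t f ≠ 0)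
    (S : Fin m → Finset F) (hS : ∀ j, t j < (S j).card) :
    ∃ a : Fin m → F, (∀ j, a j ∈ S j) ∧ eval a f ≠ 0 := by
  have ht0 : t = 0 := by
    ext j
    exact (Finset.sum_eq_zero_iff.mp h0) j (Finset.mem_univ j)
  subst ht0
  have hf : f = C (coeff 0 f) := by
    ext d
    rw [coeff_C]
    by_cases hd : d = 0
    · subst hd; simp
    · rw [if_neg (fun h => hd h.symm)]
      by_contra hne
      have hdsup : d ∈ f.support := mem_support_iff.mpr hne
      have hle := le_totalDegree hdsup
      rw [hdeg, h0, Nat.le_zero] at hle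
      apply hd
      ext j
      by_cases hj : j ∈ d.support
      · exact Finset.sum_eq_zero_iff.mp hle j hj
      · exact Finsupp.notMem_support_iff.mp hj
  have hSne : ∀ j, (S j).Nonempty := fun j =>
    Finset.card_pos.mp (lt_of_le_of_lt (Nat.zero_le _) (hS j))
  refine ⟨fun j => (hSne j).choose, fun j => (hSne j).choose_spec, ?_⟩
  rw [hf]
  simpa using hc

lemma CN (d : ℕ) : ∀ (f : MvPolynomial (Fin m) F) (t : Fin m →₀ ℕ),
    f.totalDegree ≤ d → f.totalDegree = ∑ j, t j → coeff t f ≠ 0 →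
    ∀ (S : Fin m → Finset F), (∀ j, t j < (S j).card) →
    ∃ a : Fin m → F, (∀ j, a j ∈ S j) ∧ eval a f ≠ 0 := by
  induction d with
  | zero =>
      intro f t hd hdeg hc S hS
      exact CN_const f t hdeg (by omega) hc S hS
  | succ d ih =>
      intro f t hd hdeg hc S hS
      classical
      by_cases h0 : ∑ j, t j = 0
      · exact CN_const f t hdeg h0 hc S hS
      obtain ⟨i, -, hti⟩ := Finset.exists_ne_zero_of_sum_ne_zero h0
      obtain ⟨s, hs⟩ : (S i).Nonempty :=
        Finset.card_pos.mp (lt_of_le_of_lt (Nat.zero_le _) (hS i))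
      set r := bind₁ (sb i s) f with hr
      obtain ⟨g, hgf⟩ := dvd_sub_sb i s f
      have hfeq : f = g * (X i - C s) + r := by
        rw [mul_comm g, ← hgf]; ring
      have hrt : coeff t r = 0 := coeff_sb_eq_zero i s f hti
      have hg0 : g ≠ 0 := by
        intro h
        rw [h, zero_mul, zero_add] at hfeq
        rw [hfeq] at hc
        exact hc hrt
      have hrdeg : r.totalDegree ≤ f.totalDegree := totalDegree_bind₁_le _ (sb_deg i s) f
      have hgdeg : g.totalDegree + 1 ≤ f.totalDegree := by
        have h1 : (g * (X i - C s)).totalDegree = g.totalDegree + 1 :=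
          totalDegree_mul_X_sub_C hg0 i s
        have h2 : g * (X i - C s) = f - r := by rw [mul_comm g, ← hgf]
        have h3 : (f - r).totalDegree ≤ f.totalDegree :=
          (totalDegree_sub f r).trans (max_le le_rfl hrdeg)
        rw [h2] at h1
        omega
      -- the reduced exponent vector
      set t' : Fin m →₀ ℕ := t - Finsupp.single i 1 with ht'
      have ht'i : t' i = t i - 1 := by simp [ht', Finsupp.sub_apply]
      have ht'j : ∀ j, j ≠ i → t' j = t j := by
        intro j hj
        simp [ht', Finsupp.sub_apply, Finsupp.single_apply, Ne.symm hj]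
      have hsum' : ∑ j, t' j + 1 = ∑ j, t j := by
        rw [← Finset.add_sum_erase _ t' (Finset.mem_univ i),
          ← Finset.add_sum_erase _ (fun j => t j) (Finset.mem_univ i)]
        have he : ∑ j ∈ Finset.univ.erase i, t' j = ∑ j ∈ Finset.univ.erase i, t j :=
          Finset.sum_congr rfl fun j hj => ht'j j (Finset.ne_of_mem_erase hj)
        rw [he, ht'i]
        omega
      -- coefficient of t' in g
      have hcg : coeff t g = 0 := by
        apply coeff_eq_zero_of_totalDegree_lt
        rw [sum_univ_eq_sum_support t, ← hdeg]
        omega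
      have hct' : coeff t' g = coeff t f := by
        conv_rhs => rw [hfeq]
        rw [coeff_add, hrt, add_zero, mul_sub, coeff_sub, coeff_mul_X',
          if_pos (Finsupp.mem_support_iff.mpr hti), mul_comm g (C s), coeff_C_mul, hcg,
          mul_zero, sub_zero]
      have hct'0 : coeff t' g ≠ 0 := hct' ▸ hc
      have hgdeg' : g.totalDegree = ∑ j, t' j := by
        have hle : ∑ j, t' j ≤ g.totalDegree := by
          rw [← sum_univ_eq_sum_support t']
          exact le_totalDegree (mem_support_iff.mpr hct'0)
        omega
      -- shrink S i
      set S' : Fin m → Finset F := fun j => if j = i then (S i).erase s else S j with hS'def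
      have hS' : ∀ j, t' j < (S' j).card := by
        intro j
        by_cases hj : j = i
        · subst hj
          rw [hS'def]
          simp only [if_pos rfl, if_true]
          rw [Finset.card_erase_of_mem hs, ht'i]
          have := hS j
          omega
        · rw [hS'def]
          simp only [if_neg hj]
          rw [ht'j j hj]
          exact hS j
      obtain ⟨a, haS', hag⟩ := ih g t' (by omega) hgdeg' hct'0 S' hS'
      have haS : ∀ j, a j ∈ S j := by
        intro j
        have := haS' j
        rw [hS'def] at this
        by_cases hj : j = i
        · subst hj
          simp only [if_pos rfl] at this
          exact Finset.mem_of_mem_erase this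
        · simpa [hj] using this
      by_contra hcon
      push_neg at hcon
      have h1 : eval a f = 0 := hcon a haS
      have h2 : eval a r = 0 := by
        rw [hr, eval_sb]
        apply hcon
        intro j
        by_cases hj : j = i
        · subst hj; simpa using hs
        · simpa [Function.update_apply, hj] using haS j
      have h3 : eval a g * (a i - s) = 0 := by
        have : eval a f = eval a g * (a i - s) + eval a r := by
          conv_lhs => rw [hfeq]
          simp
        rw [h1, h2, add_zero] at this
        exact this.symm
      have hais : a i ≠ s := by
        have := haS' i
        rw [hS'def] at this
        simp only [if_pos rfl] at this
        exact Finset.ne_of_mem_erase this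
      rcases mul_eq_zero.mp h3 with h | h
      · exact hag h
      · exact hais (sub_eq_zero.mp h)

end Part3

/-- **Combinatorial Nullstellensatz, homogeneous case** (Alon; Corollary 2.1 of
Oppenheim–Shusterman). Let `f ∈ F[A_0, …, A_n]` be homogeneous and suppose the
monomial with exponent vector `t` appears in `f` with nonzero coefficient (so
`∑ t j` is the degree of `f`). If the sets `S j ⊆ F` satisfy `|S j| > t j` for
all `j`, then `f` is nonzero at some point of `S 0 × ⋯ × S n`. -/
theorem combinatorial_nullstellensatz_homogeneous {F : Type*} [Field F] {n : ℕ}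
    (f : MvPolynomial (Fin (n + 1)) F) (t : Fin (n + 1) →₀ ℕ)
    (hhom : f.IsHomogeneous (∑ j, t j))
    (hcoeff : f.coeff t ≠ 0)
    (S : Fin (n + 1) → Finset F) (hS : ∀ j, t j < (S j).card) :
    ∃ a : Fin (n + 1) → F, (∀ j, a j ∈ S j) ∧ eval a f ≠ 0 := by
  have hf0 : f ≠ 0 := fun h => hcoeff (by simp [h])
  have hdeg : f.totalDegree = ∑ j, t j := hhom.totalDegree hf0
  exact Part3.CN f.totalDegree f t le_rfl hdeg hcoeff S hS
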